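/- In the Cassiopeia graph (edges 1→4, 2→4, 2→5, 3→5), the set K = {4,5} d-connects 1 and 3 (via the path 1→4←2→5←3 whose colliders 4, 5 are both in K), but K *-separates 1 and 3, since every path between 1 and 3 in the graph contains at least two colliders or a non-collider in K. -/

import Mathlib

/-- A walk in the skeleton of the digraph `E`: consecutive vertices are adjacent. -/
def IsWalk {n : ℕ} (E : Fin n → Fin n → Prop) (p : List (Fin n)) : Prop :=
  p.Chain' fun a b => E a b ∨ E b a

/-- Ancestors of the set `K` (including `K` itself): vertices with a directed path
into `K`. -/
def ancSet {n : ℕ} (E : Fin n → Fin n → Prop) (K : Set (Fin n)) : Set (Fin n) :=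
  {v | ∃ k ∈ K, Relation.ReflTransGen E v k}

/-- A path (as a list of vertices) is d-connecting given `K` if it is a walk in the
skeleton, every collider on it lies in `K ∪ an(K)`, and no non-collider on it lies
in `K`. -/
def DConnecting {n : ℕ} (E : Fin n → Fin n → Prop) (K : Set (Fin n))
    (p : List (Fin n)) : Prop :=
  IsWalk E p ∧
  ∀ a b c : Fin n, [a, b, c] <:+: p →
    ((E a b ∧ E c b) → b ∈ ancSet E K) ∧ (¬(E a b ∧ E c b) → b ∉ K)

open Classical in
/-- The number of colliders on a path. -/
noncomputable def colliderCount {n : ℕ} (E : Fin n → Fin n → Prop) :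
    List (Fin n) → ℕ
  | a :: b :: c :: rest =>
      (if E a b ∧ E c b then 1 else 0) + colliderCount E (b :: c :: rest)
  | _ => 0

/-- A path is *-connecting given `K` if it is d-connecting given `K` and contains at
most one collider. -/
def StarConnecting {n : ℕ} (E : Fin n → Fin n → Prop) (K : Set (Fin n))
    (p : List (Fin n)) : Prop :=
  DConnecting E K p ∧ colliderCount E p ≤ 1

/-- `i` and `j` are d-connected given `K`. -/
def DConn {n : ℕ} (E : Fin n → Fin n → Prop) (K : Set (Fin n)) (i j : Fin n) : Prop :=
  ∃ p : List (Fin n), p.head? = some i ∧ p.getLast? = some j ∧ 2 ≤ p.length ∧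
    DConnecting E K p

/-- `i` and `j` are *-connected given `K`. -/
def StarConn {n : ℕ} (E : Fin n → Fin n → Prop) (K : Set (Fin n)) (i j : Fin n) : Prop :=
  ∃ p : List (Fin n), p.head? = some i ∧ p.getLast? = some j ∧ 2 ≤ p.length ∧
    StarConnecting E K p

/-- `K` d-separates `I` and `J`. -/
def DSep {n : ℕ} (E : Fin n → Fin n → Prop) (I J K : Set (Fin n)) : Prop :=
  ∀ i ∈ I, ∀ j ∈ J, ¬ DConn E K i j

/-- `K` *-separates `I` and `J`. -/
def StarSep {n : ℕ} (E : Fin n → Fin n → Prop) (I J K : Set (Fin n)) : Prop :=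
  ∀ i ∈ I, ∀ j ∈ J, ¬ StarConn E K i j

/-- The Cassiopeia DAG on `{1,…,5}` (here `0,…,4`) with edges
`1→4, 2→4, 2→5, 3→5`. -/
def cassE : Fin 5 → Fin 5 → Prop := fun a b =>
  (a = 0 ∧ b = 3) ∨ (a = 1 ∧ b = 3) ∨ (a = 1 ∧ b = 4) ∨ (a = 2 ∧ b = 4)

instance (a b : Fin 5) : Decidable (cassE a b) :=
  inferInstanceAs (Decidable ((a = 0 ∧ b = 3) ∨ (a = 1 ∧ b = 3) ∨
    (a = 1 ∧ b = 4) ∨ (a = 2 ∧ b = 4)))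

open Classical in
lemma colliderCount_cons3 {n : ℕ} (E : Fin n → Fin n → Prop) (a b c : Fin n)
    (rest : List (Fin n)) :
    colliderCount E (a :: b :: c :: rest) =
      (if E a b ∧ E c b then 1 else 0) + colliderCount E (b :: c :: rest) := rfl

lemma colliderCount_cons_le {n : ℕ} (E : Fin n → Fin n → Prop) (x : Fin n)
    (p : List (Fin n)) : colliderCount E p ≤ colliderCount E (x :: p) := by
  match p with
  | [] => simp [colliderCount]
  | [a] => simp [colliderCount]
  | a :: b :: rest =>
    rw [colliderCount_cons3]
    omega

lemma colliderCount_pos {n : ℕ} {E : Fin n → Fin n → Prop} {a b c : Fin n} :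
    ∀ {p : List (Fin n)}, [a, b, c] <:+: p → E a b → E c b →
      1 ≤ colliderCount E p := by
  intro p
  induction p with
  | nil =>
    intro h _ _
    have := h.sublist.length_le
    simp at this
  | cons y l ih =>
    intro h h1 h2
    rcases List.infix_cons_iff.mp h with hpre | hinf
    · obtain ⟨t, ht⟩ := hpre
      have ht' : y :: l = a :: b :: c :: t := ht.symm
      rw [ht', colliderCount_cons3, if_pos ⟨h1, h2⟩]
      omega
    · exact le_trans (ih hinf h1 h2) (colliderCount_cons_le E y l)

/-- In the Cassiopeia graph, the set `K = {4,5}` d-connects `1` and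
`3` (via the path `1→4←2→5←3` whose colliders `4, 5` lie in `K`), but `K` *-separates
`1` and `3`: no path between `1` and `3` is *-connecting given `K`. -/
theorem cassiopeia_dConnected_starSeparated :
    DConn cassE ({3, 4} : Set (Fin 5)) 0 2 ∧
    ¬ StarConn cassE ({3, 4} : Set (Fin 5)) 0 2 := by
  constructor
  · refine ⟨[0, 3, 1, 4, 2], rfl, rfl, by simp, ?_, ?_⟩
    · exact List.isChain_cons_cons.mpr ⟨Or.inl (by decide), List.isChain_cons_cons.mpr
        ⟨Or.inr (by decide), List.isChain_cons_cons.mpr ⟨Or.inl (by decide),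
          List.isChain_cons_cons.mpr ⟨Or.inr (by decide), List.isChain_singleton _⟩⟩⟩⟩
    · intro a b c h
      have hcls : ∀ a b c : Fin 5, ([a, b, c] <:+: [0, 3, 1, 4, 2]) →
          (a = 0 ∧ b = 3 ∧ c = 1) ∨ (a = 3 ∧ b = 1 ∧ c = 4) ∨
          (a = 1 ∧ b = 4 ∧ c = 2) := by decide
      rcases hcls a b c h with ⟨ha, hb, hc⟩ | ⟨ha, hb, hc⟩ | ⟨ha, hb, hc⟩ <;>
        subst ha <;> subst hb <;> subst hc
      · exact ⟨fun _ => ⟨3, Or.inl rfl, Relation.ReflTransGen.refl⟩,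
          fun hnc => absurd ⟨by decide, by decide⟩ hnc⟩
      · refine ⟨fun h' => absurd h' (by decide), fun _ hm => ?_⟩
        rcases hm with hm | hm <;> exact absurd hm (by decide)
      · exact ⟨fun _ => ⟨4, Or.inr rfl, Relation.ReflTransGen.refl⟩,
          fun hnc => absurd ⟨by decide, by decide⟩ hnc⟩
  · rintro ⟨p, hh, hl, hlen, ⟨hw, hcond⟩, hcount⟩
    match p, hh, hl, hlen, hw, hcond, hcount with
    | p0 :: r, hh, hl, hlen, hw, hcond, hcount =>
    have hp0 : p0 = 0 := by simpa using hh
    subst hp0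
    match r, hl, hw, hcond, hcount with
    | [], hl, _, _, _ => exact absurd hl (by decide)
    | p1 :: s, hl, hw, hcond, hcount =>
    have hadj01 : cassE 0 p1 ∨ cassE p1 0 := (List.isChain_cons_cons.mp hw).1
    have hp1 : p1 = 3 :=
      (by decide : ∀ z : Fin 5, cassE 0 z ∨ cassE z 0 → z = 3) p1 hadj01
    subst hp1
    match s, hl, hw, hcond, hcount with
    | [], hl, _, _, _ => exact absurd hl (by decide)
    | p2 :: t, hl, hw, hcond, hcount =>
    have hinf1 : [0, 3, p2] <:+: (0 :: 3 :: p2 :: t : List (Fin 5)) := ⟨[], t, rfl⟩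
    have hcol1 : cassE 0 3 ∧ cassE p2 3 := by
      by_contra hnc
      exact (hcond 0 3 p2 hinf1).2 hnc (Or.inl rfl)
    have hwq : List.Chain' (fun a b : Fin 5 => cassE a b ∨ cassE b a)
        (0 :: 3 :: p2 :: t : List (Fin 5)).reverse := by
      apply List.isChain_reverse.mpr
      exact List.IsChain.imp (fun a b h => Or.symm h) hw
    have hqh : (0 :: 3 :: p2 :: t : List (Fin 5)).reverse.head? = some 2 := by
      rw [List.head?_reverse]; exact hl
    match hq : (0 :: 3 :: p2 :: t : List (Fin 5)).reverse, hqh, hwq with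
    | q0 :: q1, hqh, hwq =>
    have hq0 : q0 = 2 := by simpa using hqh
    subst hq0
    match q1, hq, hwq with
    | [], hq, hwq =>
      have := congrArg List.reverse hq
      simp at this
    | y :: q2, hq, hwq =>
    have hadjy : cassE 2 y ∨ cassE y 2 := (List.isChain_cons_cons.mp hwq).1
    have hy : y = 4 :=
      (by decide : ∀ z : Fin 5, cassE 2 z ∨ cassE z 2 → z = 4) y hadjy
    subst hy
    match q2, hq with
    | [], hq =>
      have := congrArg List.reverse hq
      simp at this
    | x :: u, hq =>
    have hpform : (0 :: 3 :: p2 :: t : List (Fin 5)) = u.reverse ++ [x, 4, 2] := by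
      have := congrArg List.reverse hq
      simpa using this
    have hinf2 : [x, 4, 2] <:+: (0 :: 3 :: p2 :: t : List (Fin 5)) :=
      ⟨u.reverse, [], by simp [hpform]⟩
    have hcol2 : cassE x 4 ∧ cassE 2 4 := by
      by_contra hnc
      exact (hcond x 4 2 hinf2).2 hnc (Or.inr rfl)
    have hinf3 : [x, 4, 2] <:+: (3 :: p2 :: t : List (Fin 5)) := by
      rcases List.infix_cons_iff.mp hinf2 with hpre | hinf
      · obtain ⟨t', ht'⟩ := hpre
        have ht'' : x :: 4 :: 2 :: t' = 0 :: 3 :: p2 :: t := ht'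
        injection ht'' with e1 r1
        injection r1 with e2 r2
        exact absurd e2 (by decide)
      · exact hinf
    have hcnt1 : 1 ≤ colliderCount cassE (3 :: p2 :: t) :=
      colliderCount_pos hinf3 hcol2.1 hcol2.2
    have hcnt : colliderCount cassE (0 :: 3 :: p2 :: t : List (Fin 5)) =
        1 + colliderCount cassE (3 :: p2 :: t) := by
      rw [colliderCount_cons3, if_pos hcol1]
    rw [hcnt] at hcount
    omega
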